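/- arXiv:gr-qc/9909029 — 2 statements merged into one kernel-verified Lean document; each statement's English description precedes it below -/
import Mathlib

section
/- The purely axial l = m modes of a rotating isentropic Newtonian star: let m ≥ 1 be an integer, and for integers j ≥ 1 set Q_j = √(((j+m)(j−m))/((2j−1)(2j+1))). Let κ ∈ ℝ and let U : (0,∞) → ℝ be differentiable and not identically zero, and suppose that for all r > 0 the following four equations hold (the perturbed Euler equations for a velocity perturbation consisting of a single axial term with l = m): (i) (κ m(m+1)/2 − m) U(r) = 0; (ii) −m Q_{m+1} Q_{m+2} [U'(r) − (m+1) U(r)/r] = 0; (iii) (κ m/2 + (m+1) Q_m² − m Q_{m+1}²) U'(r) + (m² − m(m+1)(1 − Q_m² − Q_{m+1}²)) U(r)/r = 0; (iv) (m+1) Q_{m−1} Q_m [U'(r) + m U(r)/r] = 0. Then κ = 2/(m+1) (the Papaloizou–Pringle r-mode frequency κΩ = σ + mΩ = 2Ω/(m+1)), and there exists a nonzero constant K with U(r) = K r^{m+1} for all r > 0. -/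
noncomputable section

/-- The spherical-harmonic coupling coefficient
`Q_j = √(((j+m)(j−m))/((2j−1)(2j+1)))`. -/
def Qc (m j : ℕ) : ℝ :=
  Real.sqrt ((((j : ℝ) + (m : ℝ)) * ((j : ℝ) - (m : ℝ))) /
    ((2 * (j : ℝ) - 1) * (2 * (j : ℝ) + 1)))

/-- The purely axial `l = m` modes of a rotating isentropic Newtonian star:
if `U` is differentiable on `(0,∞)`, not identically zero, and the four
perturbed Euler equations for a single axial term with `l = m ≥ 1` hold for
all `r > 0`, then `κ = 2/(m+1)` (the Papaloizou–Pringle r-mode frequency)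
and `U(r) = K r^(m+1)` for some nonzero constant `K`. -/
theorem pure_axial_l_eq_m_modes (m : ℕ) (hm : 1 ≤ m) (κ : ℝ) (U : ℝ → ℝ)
    (hUdiff : ∀ r : ℝ, 0 < r → DifferentiableAt ℝ U r)
    (hUne : ∃ r : ℝ, 0 < r ∧ U r ≠ 0)
    -- (i)  (κ m(m+1)/2 − m) U = 0
    (h1 : ∀ r : ℝ, 0 < r →
      (κ * (m : ℝ) * ((m : ℝ) + 1) / 2 - (m : ℝ)) * U r = 0)
    -- (ii)  −m Q_{m+1} Q_{m+2} [U' − (m+1) U/r] = 0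
    (h2 : ∀ r : ℝ, 0 < r →
      -(m : ℝ) * Qc m (m + 1) * Qc m (m + 2) *
        (deriv U r - ((m : ℝ) + 1) * U r / r) = 0)
    -- (iii)  (κ m/2 + (m+1) Q_m² − m Q_{m+1}²) U'
    --          + (m² − m(m+1)(1 − Q_m² − Q_{m+1}²)) U/r = 0
    (h3 : ∀ r : ℝ, 0 < r →
      (κ * (m : ℝ) / 2 + ((m : ℝ) + 1) * (Qc m m) ^ 2
          - (m : ℝ) * (Qc m (m + 1)) ^ 2) * deriv U r
        + ((m : ℝ) ^ 2 - (m : ℝ) * ((m : ℝ) + 1) *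
            (1 - (Qc m m) ^ 2 - (Qc m (m + 1)) ^ 2)) * U r / r = 0)
    -- (iv)  (m+1) Q_{m−1} Q_m [U' + m U/r] = 0
    (h4 : ∀ r : ℝ, 0 < r →
      ((m : ℝ) + 1) * Qc m (m - 1) * Qc m m *
        (deriv U r + (m : ℝ) * U r / r) = 0) :
    κ = 2 / ((m : ℝ) + 1) ∧
      ∃ K : ℝ, K ≠ 0 ∧ ∀ r : ℝ, 0 < r → U r = K * r ^ (m + 1) := by
  obtain ⟨r0, hr0, hUr0⟩ := hUne
  have hmR : (1 : ℝ) ≤ (m : ℝ) := by exact_mod_cast hm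
  -- Q_{m+1} > 0
  have hQ1 : 0 < Qc m (m + 1) := by
    unfold Qc
    apply Real.sqrt_pos.mpr
    push_cast
    apply div_pos <;> nlinarith
  -- Q_{m+2} > 0
  have hQ2 : 0 < Qc m (m + 2) := by
    unfold Qc
    apply Real.sqrt_pos.mpr
    push_cast
    apply div_pos <;> nlinarith
  -- κ from equation (i) at r0
  have hκ : κ = 2 / ((m : ℝ) + 1) := by
    have := h1 r0 hr0
    have hc : κ * (m : ℝ) * ((m : ℝ) + 1) / 2 - (m : ℝ) = 0 := by
      rcases mul_eq_zero.mp this with h | h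
      · exact h
      · exact absurd h hUr0
    have hm1 : (m : ℝ) + 1 ≠ 0 := by nlinarith
    have hm0 : (m : ℝ) ≠ 0 := by nlinarith
    field_simp at hc ⊢
    nlinarith [hc]
  refine ⟨hκ, ?_⟩
  -- the ODE U' = (m+1) U / r
  have hODE : ∀ r : ℝ, 0 < r → deriv U r = ((m : ℝ) + 1) * U r / r := by
    intro r hr
    have h := h2 r hr
    have hne : -(m : ℝ) * Qc m (m + 1) * Qc m (m + 2) ≠ 0 := by
      apply mul_ne_zero (mul_ne_zero _ (ne_of_gt hQ1)) (ne_of_gt hQ2)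
      intro h0
      have : (m : ℝ) = 0 := by linarith [neg_eq_zero.mp h0]
      nlinarith
    have := (mul_eq_zero.mp h).resolve_left hne
    linarith [this]
  -- g := U r / r^(m+1) has zero derivative on (0,∞)
  set g : ℝ → ℝ := fun r => U r / r ^ (m + 1) with hg
  have hgderiv : ∀ r : ℝ, 0 < r → HasDerivAt g 0 r := by
    intro r hr
    have hrm : (r : ℝ) ^ (m + 1) ≠ 0 := pow_ne_zero _ (ne_of_gt hr)
    have hU : HasDerivAt U (deriv U r) r := (hUdiff r hr).hasDerivAt
    have hp : HasDerivAt (fun r : ℝ => r ^ (m + 1))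
        ((↑(m + 1) : ℝ) * r ^ m) r := by
      simpa using hasDerivAt_pow (m + 1) r
    have := hU.div hp hrm
    refine HasDerivAt.congr_deriv this ?_
    symm
    rw [hODE r hr]
    have hrne : r ≠ 0 := ne_of_gt hr
    field_simp
    push_cast
    ring
  -- hence g is constant on Ioi 0
  have hgconst : ∀ r : ℝ, 0 < r → g r = g r0 := by
    intro r hr
    have hconv : Convex ℝ (Set.Ioi (0 : ℝ)) := convex_Ioi 0
    have hdiff : DifferentiableOn ℝ g (Set.Ioi (0 : ℝ)) := fun x hx =>
      ((hgderiv x hx).differentiableAt).differentiableWithinAt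
    have hfd : ∀ x ∈ Set.Ioi (0 : ℝ), fderivWithin ℝ g (Set.Ioi (0 : ℝ)) x = 0 := by
      intro x hx
      rw [fderivWithin_of_isOpen isOpen_Ioi hx]
      have := (hgderiv x hx).hasFDerivAt.fderiv
      rw [this]
      ext y
      simp
    exact hconv.is_const_of_fderivWithin_eq_zero hdiff hfd hr (Set.mem_Ioi.mpr hr0)
  refine ⟨g r0, ?_, ?_⟩
  · simp only [hg]
    exact div_ne_zero hUr0 (pow_ne_zero _ (ne_of_gt hr0))
  · intro r hr
    have := hgconst r hr
    have hrm : (r : ℝ) ^ (m + 1) ≠ 0 := pow_ne_zero _ (ne_of_gt hr)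
    simp only [hg] at this ⊢
    rw [div_eq_iff hrm] at this
    linarith [this]
end
end

section
/- No pure r-mode with l ≥ m + 2 exists in an isentropic Newtonian star: let m ≥ 0 and l ≥ m + 2 be integers, and for integers j ≥ 1 set Q_j = √(((j+m)(j−m))/((2j−1)(2j+1))). Let U : (0,∞) → ℝ be differentiable and suppose that for all r > 0 both perturbed Euler equations −l Q_{l+1} Q_{l+2} [U'(r) − (l+1) U(r)/r] = 0 and (l+1) Q_{l−1} Q_l [U'(r) + l U(r)/r] = 0 hold (these are the equations satisfied by a velocity perturbation consisting of the single axial term with index l). Then U(r) = 0 for all r > 0; i.e. a purely axial mode belonging to a single spherical harmonic with l ≥ m + 2 cannot exist. -/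
noncomputable section

lemma Qc_pos (m j : ℕ) (h : m < j) : 0 < Qc m j := by
  have hj : (m : ℝ) < (j : ℝ) := by exact_mod_cast h
  have hm : (0 : ℝ) ≤ (m : ℝ) := Nat.cast_nonneg m
  apply Real.sqrt_pos.mpr
  have hj1 : (1 : ℝ) ≤ (j : ℝ) := by exact_mod_cast Nat.one_le_iff_ne_zero.mpr (by omega)
  apply div_pos
  · nlinarith
  · nlinarith

/-- No pure r-mode with `l ≥ m + 2` exists in an isentropic Newtonian star:
if `U` is differentiable on `(0,∞)` and both perturbed Euler equations
`−l Q_{l+1} Q_{l+2} [U' − (l+1) U/r] = 0` and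
`(l+1) Q_{l−1} Q_l [U' + l U/r] = 0` hold for all `r > 0`, then `U` vanishes
identically on `(0,∞)`; i.e. a purely axial mode belonging to a single
spherical harmonic with `l ≥ m + 2` cannot exist. -/
theorem no_pure_rmode_l_ge_m_plus_two (m l : ℕ) (hl : m + 2 ≤ l)
    (U : ℝ → ℝ)
    (hUdiff : ∀ r : ℝ, 0 < r → DifferentiableAt ℝ U r)
    (h2 : ∀ r : ℝ, 0 < r →
      -(l : ℝ) * Qc m (l + 1) * Qc m (l + 2) *
        (deriv U r - ((l : ℝ) + 1) * U r / r) = 0)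
    (h4 : ∀ r : ℝ, 0 < r →
      ((l : ℝ) + 1) * Qc m (l - 1) * Qc m l *
        (deriv U r + (l : ℝ) * U r / r) = 0) :
    ∀ r : ℝ, 0 < r → U r = 0 := by
  intro r hr
  have hQ1 := Qc_pos m (l + 1) (by omega)
  have hQ2 := Qc_pos m (l + 2) (by omega)
  have hQ3 := Qc_pos m (l - 1) (by omega)
  have hQ4 := Qc_pos m l (by omega)
  have hlpos : (0 : ℝ) < (l : ℝ) := by
    have : 0 < l := by omega
    exact_mod_cast this
  have e2 := h2 r hr
  have e4 := h4 r hr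
  have hA : deriv U r - ((l : ℝ) + 1) * U r / r = 0 := by
    have hc : -(l : ℝ) * Qc m (l + 1) * Qc m (l + 2) ≠ 0 := by
      intro h
      nlinarith [mul_pos hlpos (mul_pos hQ1 hQ2)]
    exact (mul_eq_zero.mp e2).resolve_left hc
  have hB : deriv U r + (l : ℝ) * U r / r = 0 := by
    have hc : ((l : ℝ) + 1) * Qc m (l - 1) * Qc m l ≠ 0 := by
      intro h
      nlinarith [mul_pos (by linarith : (0:ℝ) < (l:ℝ)+1) (mul_pos hQ3 hQ4)]
    exact (mul_eq_zero.mp e4).resolve_left hc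
  have hU : ((2 * (l : ℝ) + 1)) * (U r / r) = 0 := by
    have := sub_eq_zero.mpr (hB.trans hA.symm)
    field_simp at hA hB ⊢
    nlinarith [hA, hB]
  have h2l : (2 * (l : ℝ) + 1) ≠ 0 := by positivity
  have := (mul_eq_zero.mp hU).resolve_left h2l
  field_simp at this
  exact this.trans (mul_zero r)
end
end
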